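/- For a density matrix ρ, a Hermitian matrix H, and α ∈ [0,1], the Wigner–Yanase–Dyson skew information I_{ρ,α}(H) = Tr[ρH²] − Tr[ρ^α H ρ^{1−α} H] is at most the generalized skew information K_{ρ,α}(H) = (1/2)Tr[(i[(ρ^α+ρ^{1−α})/2, H])²] (with the sign convention making both quantities real and K defined via the commutator squared with a minus sign, i.e. K_{ρ,α}(H) = −(1/2)Tr[[(ρ^α+ρ^{1−α})/2, H]²]). -/

import Mathlib

open Matrix ComplexOrder

/-- The real power of a positive semidefinite matrix, defined via the
continuous functional calculus (spectral decomposition). -/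
noncomputable def mpow {n : Type*} [Fintype n] [DecidableEq n]
    (ρ : Matrix n n ℂ) (hρ : ρ.PosSemidef) (α : ℝ) : Matrix n n ℂ :=
  hρ.1.cfc (fun x : ℝ => x ^ α)

lemma mpow_isHermitian {n : Type*} [Fintype n] [DecidableEq n]
    (ρ : Matrix n n ℂ) (hρ : ρ.PosSemidef) (α : ℝ) :
    (mpow ρ hρ α).IsHermitian := by
  unfold mpow Matrix.IsHermitian.cfc
  unfold Matrix.IsHermitian
  rw [Unitary.conjStarAlgAut_apply]
  simp only [conjTranspose_mul, conjTranspose_conjTranspose, diagonal_conjTranspose]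
  rw [mul_assoc]
  congr 1
  · simp [star, Matrix.star_eq_conjTranspose]
  · have h : star ((RCLike.ofReal : ℝ → ℂ) ∘ (fun x => x ^ α) ∘ hρ.1.eigenvalues)
        = (RCLike.ofReal : ℝ → ℂ) ∘ (fun x => x ^ α) ∘ hρ.1.eigenvalues := by
      funext x
      simp [RCLike.star_def, RCLike.conj_ofReal]
    rw [h, Matrix.star_eq_conjTranspose]

lemma trace_conjTranspose_mul_self_nonneg {n : Type*} [Fintype n] [DecidableEq n]
    (A : Matrix n n ℂ) : (0 : ℂ) ≤ (Aᴴ * A).trace := by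
  rw [Matrix.trace]
  apply Finset.sum_nonneg
  intro i _
  rw [Matrix.diag_apply, Matrix.mul_apply]
  apply Finset.sum_nonneg
  intro j _
  simpa using star_mul_self_nonneg (A j i)

theorem stmt2 {n : Type*} [Fintype n] [DecidableEq n]
    (ρ : Matrix n n ℂ) (hρ : ρ.PosSemidef) (htr : ρ.trace = 1)
    (H : Matrix n n ℂ) (hH : H.IsHermitian)
    (α : ℝ) (hα : α ∈ Set.Icc (0:ℝ) 1) :
    (1/2 : ℂ) * ((Complex.I • (mpow ρ hρ α * H - H * mpow ρ hρ α)) *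
        (Complex.I • (mpow ρ hρ (1-α) * H - H * mpow ρ hρ (1-α)))).trace ≤
      (1/2 : ℂ) * ((Complex.I • (((1/2 : ℂ) • (mpow ρ hρ α + mpow ρ hρ (1-α))) * H -
            H * ((1/2 : ℂ) • (mpow ρ hρ α + mpow ρ hρ (1-α))))) ^ 2).trace := by
  set A := mpow ρ hρ α with hAdef
  set B := mpow ρ hρ (1-α) with hBdef
  have hA : A.IsHermitian := mpow_isHermitian ρ hρ α
  have hB : B.IsHermitian := mpow_isHermitian ρ hρ (1-α)
  set X := Complex.I • (A * H - H * A) with hXdef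
  set Y := Complex.I • (B * H - H * B) with hYdef
  have hX : Xᴴ = X := by
    rw [hXdef, Matrix.conjTranspose_smul, Matrix.conjTranspose_sub,
      Matrix.conjTranspose_mul, Matrix.conjTranspose_mul, hA.eq, hH.eq]
    simp [Complex.conj_I, smul_sub]
    module
  have hY : Yᴴ = Y := by
    rw [hYdef, Matrix.conjTranspose_smul, Matrix.conjTranspose_sub,
      Matrix.conjTranspose_mul, Matrix.conjTranspose_mul, hB.eq, hH.eq]
    simp [Complex.conj_I, smul_sub]
    module
  have hR : (Complex.I • (((1/2 : ℂ) • (A + B)) * H -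
      H * ((1/2 : ℂ) • (A + B)))) = (1/2 : ℂ) • (X + Y) := by
    rw [hXdef, hYdef]
    simp only [Matrix.smul_mul, Matrix.mul_smul, Matrix.add_mul, Matrix.mul_add,
      smul_sub, smul_add]
    module
  rw [hR, ← sub_nonneg]
  have key : (1/2 : ℂ) * (((1/2 : ℂ) • (X + Y)) ^ 2).trace
      - (1/2 : ℂ) * (X * Y).trace
      = (1/8 : ℂ) * ((X - Y)ᴴ * (X - Y)).trace := by
    have h1 : (X - Y)ᴴ = X - Y := by rw [Matrix.conjTranspose_sub, hX, hY]
    rw [h1, sq]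
    simp only [Matrix.smul_mul, Matrix.mul_smul, smul_smul, Matrix.sub_mul,
      Matrix.mul_sub, Matrix.add_mul, Matrix.mul_add, Matrix.trace_smul,
      Matrix.trace_add, Matrix.trace_sub, smul_eq_mul]
    rw [Matrix.trace_mul_comm Y X]
    ring
  rw [key]
  exact mul_nonneg (by norm_num [Complex.le_def]) (trace_conjTranspose_mul_self_nonneg (X - Y))
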